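/- Let B₃ be the braid group on three strands, presented with generators s, t and relation s·t·s = t·s·t, let 𝒯(a₁,…,aₙ) = s^{a₁}·t^{−a₂}·s^{a₃}·⋯ ∈ B₃, and let E = 𝒯(1,−1,1) = s·t·s. Let m ∈ ℤ and ε ∈ {1,−1}. Then the following seven identities hold in B₃ for all integers a, b, c: (1) 𝒯(−2)·(𝒯(b)·E^{2m+1})·𝒯(2) = 𝒯(b−2,−2)·E^{2m+1}; (2) 𝒯(−2)·(𝒯(ε,a)·E^{2m})·𝒯(2) = 𝒯(ε−2,a,2)·E^{2m}; (3) 𝒯(−2)·(𝒯(ε)·E^{2m})·𝒯(2) = 𝒯(ε)·E^{2m}; (4) 𝒯(−2)·(𝒯(0,a)·E^{2m+1})·𝒯(2) = 𝒯(−2,a−2)·E^{2m+1}; (5) 𝒯(−2)·(𝒯(0,a,b)·E^{2m+1})·𝒯(2) = 𝒯(−2,a,b,−2)·E^{2m+1}; (6) 𝒯(−2)·(𝒯(0,a,ε,c)·E^{2m})·𝒯(2) = 𝒯(−2,a,ε,c,2)·E^{2m}; (7) 𝒯(−2)·(𝒯(0,a,ε)·E^{2m})·𝒯(2) = 𝒯(−2,a,ε+2)·E^{2m}.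 -/

import Mathlib

/-- The single braid relation `s·t·s = t·s·t` for the braid group on three strands,
written as a relator in the free group on two generators. -/
def braidRels : Set (FreeGroup (Fin 2)) :=
  { FreeGroup.of 0 * FreeGroup.of 1 * FreeGroup.of 0 *
    (FreeGroup.of 1 * FreeGroup.of 0 * FreeGroup.of 1)⁻¹ }

/-- The braid group on three strands, presented with generators `s`, `t`
and the single relation `s·t·s = t·s·t`. -/
abbrev B3 : Type := PresentedGroup braidRels

/-- The first generator `s` of `B₃`. -/
def s : B3 := PresentedGroup.of 0

/-- The second generator `t` of `B₃`. -/
def t : B3 := PresentedGroup.of 1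

/-- The half-twist `Δ = s·t·s` (the 3-braid `E = 𝒯(1,−1,1)`). -/
def Δ : B3 := s * t * s

/-- Auxiliary function building `𝒯(a₁,…,aₙ)`: when the flag is `true` the next
entry is a power of `s` (horizontal twists on the top two strands), when `false`
it is an inverse power of `t`. -/
def Tgo : Bool → List ℤ → B3
  | _, [] => 1
  | true, a :: l => s ^ a * Tgo false l
  | false, a :: l => t ^ (-a) * Tgo true l

/-- The 3-braid `𝒯(a₁,…,aₙ) = s^{a₁} · t^{−a₂} · s^{a₃} · t^{−a₄} · ⋯` in `B₃`. -/
def T (l : List ℤ) : B3 := Tgo true l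

/-- The special 3-braid `E = 𝒯(1,−1,1) = s·t·s`. -/
def E : B3 := T [1, -1, 1]


lemma braid : s * t * s = t * s * t := by
  have h : (QuotientGroup.mk (FreeGroup.of 0 * FreeGroup.of 1 * FreeGroup.of 0 *
      (FreeGroup.of 1 * FreeGroup.of 0 * FreeGroup.of 1)⁻¹) : B3) = 1 := by
    rw [QuotientGroup.eq_one_iff]
    exact Subgroup.subset_normalClosure rfl
  have h2 : s * t * s * (t * s * t)⁻¹ = 1 := by
    rw [show s * t * s * (t * s * t)⁻¹ = PresentedGroup.mk braidRels (FreeGroup.of 0 * FreeGroup.of 1 * FreeGroup.of 0 *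
      (FreeGroup.of 1 * FreeGroup.of 0 * FreeGroup.of 1)⁻¹) by simp [s, t, PresentedGroup.of]]
    exact h
  exact mul_inv_eq_one.mp h2

lemma E_def : E = s * t * s := by
  show Tgo true [1,-1,1] = s * t * s
  simp [Tgo]
  group

lemma sc_st : SemiconjBy E s t := by
  show E * s = t * E
  rw [E_def]
  calc s * t * s * s = (s * t * s) * s := rfl
    _ = (t * s * t) * s := by rw [braid]
    _ = t * (s * t * s) := by group

lemma sc_ts : SemiconjBy E t s := by
  show E * t = s * E
  rw [E_def]
  calc s * t * s * t = s * (t * s * t) := by group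
    _ = s * (s * t * s) := by rw [← braid]
    _ = s * (s * t * s) := rfl

lemma sc_szpow (k : ℤ) : E * s ^ k = t ^ k * E := (sc_st.zpow_right k)
lemma sc_tzpow (k : ℤ) : E * t ^ k = s ^ k * E := (sc_ts.zpow_right k)

lemma comm_E2_s : Commute (E ^ (2:ℤ)) s := by
  show E ^ (2:ℤ) * s = s * E ^ (2:ℤ)
  have : E ^ (2:ℤ) = E * E := zpow_two E
  rw [this, mul_assoc, sc_st.eq, ← mul_assoc, sc_ts.eq, mul_assoc]

lemma comm_E2_t : Commute (E ^ (2:ℤ)) t := by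
  show E ^ (2:ℤ) * t = t * E ^ (2:ℤ)
  have : E ^ (2:ℤ) = E * E := zpow_two E
  rw [this, mul_assoc, sc_ts.eq, ← mul_assoc, sc_st.eq, mul_assoc]

lemma even_s (m k : ℤ) : E ^ (2 * m) * s ^ k = s ^ k * E ^ (2 * m) := by
  have h := (comm_E2_s.zpow_zpow m k).eq
  rwa [← zpow_mul] at h

lemma even_t (m k : ℤ) : E ^ (2 * m) * t ^ k = t ^ k * E ^ (2 * m) := by
  have h := (comm_E2_t.zpow_zpow m k).eq
  rwa [← zpow_mul] at h

lemma odd_s (m k : ℤ) : E ^ (2 * m + 1) * s ^ k = t ^ k * E ^ (2 * m + 1) := by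
  have h1 : E ^ (2 * m + 1) = E ^ (2 * m) * E := by group
  rw [h1, mul_assoc, sc_szpow, ← mul_assoc, even_t, mul_assoc]

/-- The seven braid-level identities constituting the complete computation in the proof of
Theorem 3.8: for every integer `m` and every `ε ∈ {1,−1}`, the Γ₂-move
`B ↦ 𝒯(−2)·B·𝒯(2)` acts as listed on each standard-form 3-braid whose four-plat closure
is the unknot. -/
theorem gamma2_all_cases (m ε : ℤ) (hε : ε = 1 ∨ ε = -1) :
    (∀ b : ℤ, T [-2] * (T [b] * E ^ (2 * m + 1)) * T [2]
        = T [b - 2, -2] * E ^ (2 * m + 1)) ∧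
    (∀ a : ℤ, T [-2] * (T [ε, a] * E ^ (2 * m)) * T [2]
        = T [ε - 2, a, 2] * E ^ (2 * m)) ∧
    (T [-2] * (T [ε] * E ^ (2 * m)) * T [2] = T [ε] * E ^ (2 * m)) ∧
    (∀ a : ℤ, T [-2] * (T [0, a] * E ^ (2 * m + 1)) * T [2]
        = T [-2, a - 2] * E ^ (2 * m + 1)) ∧
    (∀ a b : ℤ, T [-2] * (T [0, a, b] * E ^ (2 * m + 1)) * T [2]
        = T [-2, a, b, -2] * E ^ (2 * m + 1)) ∧
    (∀ a c : ℤ, T [-2] * (T [0, a, ε, c] * E ^ (2 * m)) * T [2]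
        = T [-2, a, ε, c, 2] * E ^ (2 * m)) ∧
    (∀ a : ℤ, T [-2] * (T [0, a, ε] * E ^ (2 * m)) * T [2]
        = T [-2, a, ε + 2] * E ^ (2 * m)) := by
  refine ⟨?_, ?_, ?_, ?_, ?_, ?_, ?_⟩
  · intro b
    simp only [T, Tgo, mul_one, neg_neg, zpow_zero, one_mul]
    rw [mul_assoc, mul_assoc _ (E ^ (2*m+1)), odd_s]
    group
  · intro a
    simp only [T, Tgo, mul_one, neg_neg, zpow_zero, one_mul]
    rw [mul_assoc, mul_assoc _ (E ^ (2*m)), even_s]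
    group
  · simp only [T, Tgo, mul_one, neg_neg, zpow_zero, one_mul]
    rw [mul_assoc, mul_assoc _ (E ^ (2*m)), even_s]
    group
  · intro a
    simp only [T, Tgo, mul_one, neg_neg, zpow_zero, one_mul]
    rw [mul_assoc, mul_assoc _ (E ^ (2*m+1)), odd_s]
    group
  · intro a b
    simp only [T, Tgo, mul_one, neg_neg, zpow_zero, one_mul]
    rw [mul_assoc, mul_assoc _ (E ^ (2*m+1)), odd_s]
    group
  · intro a c
    simp only [T, Tgo, mul_one, neg_neg, zpow_zero, one_mul]
    rw [mul_assoc, mul_assoc _ (E ^ (2*m)), even_s]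
    group
  · intro a
    simp only [T, Tgo, mul_one, neg_neg, zpow_zero, one_mul]
    rw [mul_assoc, mul_assoc _ (E ^ (2*m)), even_s]
    group
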